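/- Let π̄ : ℝ² × (−2,2) → ℝ³ be the Lagrange map π̄(q₂,q₃,α) = (q₁*(q₂,q₃,α), q₂, q₃). Then the Fréchet derivative of π̄ at (q₂,q₃,α) is invertible if and only if −3α² + q₃ + q₂·α·(4−α²)^(−3/2)·(α²−6) ≠ 0. Equivalently, the singular set of the Lagrange map is exactly the set of points with q₃ = 3α² − q₂·α·(4−α²)^(−3/2)·(α²−6). -/

import Mathlib

/-- The `q₁` coordinate of the Lagrange-submanifold embedding of the toy model. -/
noncomputable def q₁star (q₂ q₃ α : ℝ) : ℝ :=
  α ^ 3 - q₃ * α - (1 / 2) * q₂ * Real.sqrt (4 - α ^ 2)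
    + (1 / 2) * q₂ * α ^ 2 * (Real.sqrt (4 - α ^ 2))⁻¹

/-- The Lagrange map of the toy model, `π̄(q₂,q₃,α) = (q₁*(q₂,q₃,α), q₂, q₃)`. -/
noncomputable def pibar (x : ℝ × ℝ × ℝ) : ℝ × ℝ × ℝ :=
  (q₁star x.1 x.2.1 x.2.2, x.1, x.2.1)

/-- The Fréchet derivative of the Lagrange map `π̄` at `(q₂,q₃,α)` (with `α ∈ (−2,2)`) is
invertible iff `−3α² + q₃ + q₂α(4−α²)^(−3/2)(α²−6) ≠ 0`; equivalently, the singular set of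
the Lagrange map is exactly `{(q₂,q₃,α) : q₃ = 3α² − q₂α(4−α²)^(−3/2)(α²−6)}`. -/
theorem pibar_fderiv_bijective_iff (q₂ q₃ α : ℝ) (hα : α ∈ Set.Ioo (-2 : ℝ) 2) :
    (Function.Bijective (fderiv ℝ pibar (q₂, q₃, α))
      ↔ -3 * α ^ 2 + q₃ + q₂ * α * (Real.sqrt (4 - α ^ 2) ^ 3)⁻¹ * (α ^ 2 - 6) ≠ 0)
    ∧ (¬ Function.Bijective (fderiv ℝ pibar (q₂, q₃, α))
      ↔ q₃ = 3 * α ^ 2 - q₂ * α * (Real.sqrt (4 - α ^ 2) ^ 3)⁻¹ * (α ^ 2 - 6)) := by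
  obtain ⟨h1, h2⟩ := hα
  have hpos : (0:ℝ) < 4 - α ^ 2 := by nlinarith
  set x : ℝ × ℝ × ℝ := (q₂, q₃, α) with hx
  set s := Real.sqrt (4 - α ^ 2) with hsdef
  have hs0 : 0 < s := Real.sqrt_pos.2 hpos
  have hs2 : s ^ 2 = 4 - α ^ 2 := Real.sq_sqrt hpos.le
  have hC : HasFDerivAt (fun x : ℝ × ℝ × ℝ => x.1)
      (ContinuousLinearMap.fst ℝ ℝ (ℝ × ℝ)) x := hasFDerivAt_fst
  have hB : HasFDerivAt (fun x : ℝ × ℝ × ℝ => x.2.1)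
      ((ContinuousLinearMap.fst ℝ ℝ ℝ).comp (ContinuousLinearMap.snd ℝ ℝ (ℝ × ℝ))) x :=
    hasFDerivAt_fst.comp x hasFDerivAt_snd
  have hA : HasFDerivAt (fun x : ℝ × ℝ × ℝ => x.2.2)
      ((ContinuousLinearMap.snd ℝ ℝ ℝ).comp (ContinuousLinearMap.snd ℝ ℝ (ℝ × ℝ))) x :=
    hasFDerivAt_snd.comp x hasFDerivAt_snd
  have hA2 : HasDerivAt (fun t : ℝ => t ^ 2) (2 * α ^ 1) ((fun x : ℝ × ℝ × ℝ => x.2.2) x) := by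
    simpa [hx] using hasDerivAt_pow 2 α
  have hApow2 := hA2.comp_hasFDerivAt x hA
  have hA3 : HasDerivAt (fun t : ℝ => t ^ 3) (3 * α ^ 2) ((fun x : ℝ × ℝ × ℝ => x.2.2) x) := by
    simpa [hx] using hasDerivAt_pow 3 α
  have hApow3 := hA3.comp_hasFDerivAt x hA
  have hinner := (hasFDerivAt_const (4:ℝ) x).sub hApow2
  have hsq : HasDerivAt Real.sqrt (1 / (2 * s)) (4 - α ^ 2) := by
    have := Real.hasDerivAt_sqrt (ne_of_gt hpos)
    simpa [hsdef] using this
  have hsq' : HasDerivAt Real.sqrt (1 / (2 * s)) ((fun x : ℝ × ℝ × ℝ => 4 - x.2.2 ^ 2) x) := by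
    simpa [hx] using hsq
  have hS := hsq'.comp_hasFDerivAt x hinner
  have hSval : Real.sqrt (4 - x.2.2 ^ 2) ≠ 0 := by
    simp only [hx]
    exact hs0.ne'
  have hinv : HasDerivAt (fun y : ℝ => y⁻¹) (-(s ^ 2)⁻¹)
      ((Real.sqrt ∘ fun x : ℝ × ℝ × ℝ => 4 - ((fun t : ℝ => t ^ 2) ∘ fun x : ℝ × ℝ × ℝ => x.2.2) x) x) := by
    simpa [hx, Function.comp, hsdef] using hasDerivAt_inv hs0.ne'
  have hSinv := hinv.comp_hasFDerivAt x hS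
  -- build f
  have hf := ((hApow3.sub (hB.mul hA)).sub ((hC.const_mul ((1:ℝ)/2)).mul hS)).add
      ((((hC.const_mul ((1:ℝ)/2)).mul hApow2)).mul hSinv)
  have hp := hf.prodMk (hC.prodMk hB)
  have hfd : fderiv ℝ pibar x = (_ : ℝ × ℝ × ℝ →L[ℝ] ℝ × ℝ × ℝ) := hp.fderiv
  set a : ℝ := -(1/2) * s + (1/2) * α ^ 2 * s⁻¹ with hadef
  set c : ℝ := 3 * α ^ 2 - q₃ - q₂ * α * (s ^ 3)⁻¹ * (α ^ 2 - 6) with hcdef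
  have key : ∀ v : ℝ × ℝ × ℝ, fderiv ℝ pibar x v =
      (a * v.1 + (-α) * v.2.1 + c * v.2.2, v.1, v.2.1) := by
    intro v
    rw [hfd]
    simp only [ContinuousLinearMap.prod_apply, ContinuousLinearMap.add_apply,
      ContinuousLinearMap.sub_apply, ContinuousLinearMap.smul_apply,
      ContinuousLinearMap.coe_comp', ContinuousLinearMap.coe_fst',
      ContinuousLinearMap.coe_snd', ContinuousLinearMap.zero_apply,
      Function.comp_apply, smul_eq_mul, ContinuousLinearMap.coe_smul',
      Pi.smul_apply]
    refine Prod.ext ?_ rfl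
    simp only [hadef, hcdef, hx]
    have h3 : s ^ 3 = s * s ^ 2 := by ring
    simp only [Pi.mul_apply, Pi.sub_apply, Function.comp_apply, ← hsdef]
    field_simp
    linear_combination (6 * α * v.2.2 * q₂) * hs2
  have hc_iff : c = -(-3 * α ^ 2 + q₃ + q₂ * α * (s ^ 3)⁻¹ * (α ^ 2 - 6)) := by
    rw [hcdef]; ring
  have bij_iff : Function.Bijective (fderiv ℝ pibar x) ↔ c ≠ 0 := by
    constructor
    · intro hbij hc0
      have h01 : fderiv ℝ pibar x ((0 : ℝ), (0 : ℝ), (1 : ℝ)) = fderiv ℝ pibar x 0 := by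
        rw [key, map_zero]
        simp [hc0]
      have h2 := hbij.1 h01
      simp [Prod.ext_iff] at h2
    · intro hc0
      rw [Function.bijective_iff_has_inverse]
      refine ⟨fun y => (y.2.1, y.2.2, (y.1 - a * y.2.1 + α * y.2.2) / c), ?_, ?_⟩
      · intro v
        obtain ⟨v1, v2, v3⟩ := v
        rw [key]
        refine Prod.ext_iff.mpr ⟨rfl, Prod.ext_iff.mpr ⟨rfl, ?_⟩⟩
        show (a * v1 + -α * v2 + c * v3 - a * v1 + α * v2) / c = v3
        field_simp
        ring
      · intro y
        obtain ⟨y1, y2, y3⟩ := y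
        rw [key]
        refine Prod.ext_iff.mpr ⟨?_, rfl⟩
        show a * y2 + -α * y3 + c * ((y1 - a * y2 + α * y3) / c) = y1
        field_simp
        ring
  constructor
  · rw [bij_iff, hc_iff, neg_ne_zero]
  · rw [bij_iff, hc_iff, neg_ne_zero]
    simp only [ne_eq, not_not]
    constructor <;> intro h <;> linarith
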